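/- Let A ∈ ℝ^{q×q}, G ∈ ℝ^{q×r} with (A, G) a stabilizable pair. If there exists a symmetric positive semidefinite Σ ∈ ℝ^{q×q} satisfying Σ = A Σ Aᵀ + G Gᵀ, then A is exponentially stable (all eigenvalues of A lie in the open unit disc). -/

import Mathlib

open Matrix Complex

lemma spec_iff_det {n : ℕ} (M : Matrix (Fin n) (Fin n) ℂ) (μ : ℂ) :
    μ ∈ spectrum ℂ M ↔ (M - μ • 1).det = 0 := by
  rw [spectrum.mem_iff, Matrix.isUnit_iff_isUnit_det, isUnit_iff_ne_zero, not_ne_iff]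
  have h : (algebraMap ℂ (Matrix (Fin n) (Fin n) ℂ)) μ - M = -(M - μ • 1) := by
    simp [Algebra.algebraMap_eq_smul_one]
  rw [h, Matrix.det_neg]
  constructor
  · intro h0
    rcases mul_eq_zero.mp h0 with h1 | h1
    · exact absurd h1 (pow_ne_zero _ (by norm_num))
    · exact h1
  · intro h0; rw [h0, mul_zero]

-- conjTranspose of a real matrix mapped to ℂ is the transpose mapped to ℂ
lemma ctr {m n : Type*} (M : Matrix m n ℝ) :
    (M.map (fun x : ℝ => (x : ℂ)))ᴴ = Mᵀ.map (fun x : ℝ => (x : ℂ)) := by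
  ext i j; simp [conjTranspose_apply]

lemma conj_shift {n : ℕ} (M : Matrix (Fin n) (Fin n) ℝ) (μ : ℂ) :
    ((M.map (fun x : ℝ => (x : ℂ))) - μ • 1)ᴴ
      = (Mᵀ.map (fun x : ℝ => (x : ℂ))) - (starRingEnd ℂ μ) • 1 := by
  ext i j
  by_cases h : i = j <;>
    simp [conjTranspose_apply, Matrix.one_apply, h, eq_comm, map_sub, apply_ite]

lemma det_shift_transpose {n : ℕ} (M : Matrix (Fin n) (Fin n) ℝ) (μ : ℂ)
    (h : ((Mᵀ.map (fun x : ℝ => (x : ℂ))) - (starRingEnd ℂ μ) • 1).det = 0) :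
    ((M.map (fun x : ℝ => (x : ℂ))) - μ • 1).det = 0 := by
  rw [← conj_shift, Matrix.det_conjTranspose] at h
  exact star_eq_zero.mp h

-- star x ⬝ᵥ x as a real sum
lemma star_dot_self {n : Type*} [Fintype n] (x : n → ℂ) :
    star x ⬝ᵥ x = ((∑ i, Complex.normSq (x i) : ℝ) : ℂ) := by
  simp only [dotProduct, Pi.star_apply]
  push_cast
  refine Finset.sum_congr rfl fun i _ => ?_
  rw [show star (x i) = (starRingEnd ℂ) (x i) from rfl, ← Complex.normSq_eq_conj_mul_self]

/-- Converse Lyapunov criterion: if `(A, G)` is stabilizable and there exists a PSD solution of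
`Σ = A Σ Aᵀ + G Gᵀ`, then all eigenvalues of `A` lie in the open unit disc. -/
theorem stmt_11 (q r : ℕ) (A : Matrix (Fin q) (Fin q) ℝ) (G : Matrix (Fin q) (Fin r) ℝ)
    (hstabilizable : ∃ K : Matrix (Fin r) (Fin q) ℝ,
      ∀ μ ∈ spectrum ℂ ((A - G * K).map (fun x : ℝ => (x : ℂ))), ‖μ‖ < 1)
    (hexists : ∃ S : Matrix (Fin q) (Fin q) ℝ, S.PosSemidef ∧ S = A * S * Aᵀ + G * Gᵀ) :
    ∀ μ ∈ spectrum ℂ (A.map (fun x : ℝ => (x : ℂ))), ‖μ‖ < 1 := by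
  obtain ⟨K, hK⟩ := hstabilizable
  obtain ⟨S, hS, heq⟩ := hexists
  intro μ hμ
  by_contra hge
  push_neg at hge   -- 1 ≤ ‖μ‖
  have hdet : ((A.map (fun x : ℝ => (x : ℂ))) - μ • 1).det = 0 :=
    (spec_iff_det _ μ).mp hμ
  have hdetT : ((Aᵀ.map (fun x : ℝ => (x : ℂ))) - (starRingEnd ℂ μ) • 1).det = 0 := by
    rw [← conj_shift, Matrix.det_conjTranspose, hdet, star_zero]
  obtain ⟨v, hv0, hv⟩ := (Matrix.exists_mulVec_eq_zero_iff).mpr hdetT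
  have heig : (Aᵀ.map (fun x : ℝ => (x : ℂ))) *ᵥ v = (starRingEnd ℂ μ) • v := by
    rw [Matrix.sub_mulVec, sub_eq_zero] at hv
    simpa [Matrix.smul_mulVec, Matrix.one_mulVec] using hv
  -- complexify
  set c : ℝ → ℂ := fun x : ℝ => (x : ℂ) with hc
  have hcr : c = ⇑(Complex.ofRealHom) := rfl
  have heqℂ : S.map c =
      A.map c * S.map c * (Aᵀ.map c) + G.map c * (Gᵀ.map c) := by
    conv_lhs => rw [heq]
    rw [hcr]
    simp [Matrix.map_add, Matrix.map_mul]
  -- quadratic form identities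
  set w : Fin r → ℂ := (Gᵀ.map c) *ᵥ v with hw
  have hvec : star v ᵥ* (A.map c) = μ • star v := by
    have : A.map c = ((Aᵀ.map c))ᴴ := by rw [ctr, Matrix.transpose_transpose]
    rw [this, ← Matrix.star_mulVec, heig, star_smul]
    simp
  have key : star v ⬝ᵥ (S.map c *ᵥ v)
      = (μ * starRingEnd ℂ μ) * (star v ⬝ᵥ (S.map c *ᵥ v)) + star w ⬝ᵥ w := by
    conv_lhs => rw [heqℂ]
    rw [Matrix.add_mulVec, dotProduct_add]
    congr 1
    · rw [← Matrix.mulVec_mulVec, ← Matrix.mulVec_mulVec, heig,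
        Matrix.mulVec_smul, Matrix.dotProduct_mulVec, hvec]
      rw [smul_dotProduct, dotProduct_smul, smul_eq_mul, smul_eq_mul]
      ring
    · rw [← Matrix.mulVec_mulVec, Matrix.dotProduct_mulVec, ← hw]
      have hG : star v ᵥ* (G.map c) = star w := by
        have : G.map c = ((Gᵀ.map c))ᴴ := by rw [ctr, Matrix.transpose_transpose]
        rw [this, ← Matrix.star_mulVec, hw]
      rw [hG]
  -- positivity : S = Bᵀ B
  obtain ⟨B, hB⟩ : ∃ B : Matrix (Fin q) (Fin q) ℝ, S = Bᴴ * B := by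
    open scoped MatrixOrder in exact CStarAlgebra.nonneg_iff_eq_star_mul_self.mp hS.nonneg
  set u : Fin q → ℂ := (B.map c) *ᵥ v with hu
  have hsu : star v ⬝ᵥ (S.map c *ᵥ v) = star u ⬝ᵥ u := by
    have hBt : Bᴴ = Bᵀ := by ext i j; simp [conjTranspose_apply]
    have : S.map c = (Bᵀ.map c) * (B.map c) := by
      rw [hB, hBt, hcr, Matrix.map_mul]
    rw [this, ← Matrix.mulVec_mulVec, Matrix.dotProduct_mulVec, ← hu]
    have hBv : star v ᵥ* (Bᵀ.map c) = star u := by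
      have h2 : Bᵀ.map c = ((B.map c))ᴴ := (ctr B).symm
      rw [h2, ← Matrix.star_mulVec, hu]
    rw [hBv]
  -- pass to reals
  have hmuls : μ * starRingEnd ℂ μ = ((Complex.normSq μ : ℝ) : ℂ) := Complex.mul_conj μ
  rw [hsu, star_dot_self, star_dot_self, hmuls] at key
  have keyR : (∑ i, Complex.normSq (u i))
      = Complex.normSq μ * (∑ i, Complex.normSq (u i)) + ∑ i, Complex.normSq (w i) := by
    exact_mod_cast key
  have hsu0 : 0 ≤ ∑ i, Complex.normSq (u i) :=
    Finset.sum_nonneg fun i _ => Complex.normSq_nonneg _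
  have hsw0 : 0 ≤ ∑ i, Complex.normSq (w i) :=
    Finset.sum_nonneg fun i _ => Complex.normSq_nonneg _
  have hnsq : 1 ≤ Complex.normSq μ := by
    have : Complex.normSq μ = ‖μ‖^2 := (Complex.sq_norm μ).symm
    rw [this]
    nlinarith [hge]
  have hswzero : ∑ i, Complex.normSq (w i) = 0 := by nlinarith
  have hwzero : w = 0 := by
    funext i
    have := (Finset.sum_eq_zero_iff_of_nonneg
      (fun j _ => Complex.normSq_nonneg (w j))).mp hswzero i (Finset.mem_univ i)
    simpa using Complex.normSq_eq_zero.mp this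
  -- now μ is an eigenvalue of A - G K
  have heig2 : (((A - G * K)ᵀ).map c - (starRingEnd ℂ μ) • 1) *ᵥ v = 0 := by
    have hmap : ((A - G * K)ᵀ).map c = Aᵀ.map c - (Kᵀ.map c) * (Gᵀ.map c) := by
      rw [Matrix.transpose_sub, Matrix.transpose_mul, hcr]
      simp [Matrix.map_sub, Matrix.map_mul]
    rw [Matrix.sub_mulVec, hmap, Matrix.sub_mulVec, ← Matrix.mulVec_mulVec, ← hw,
      hwzero, Matrix.mulVec_zero, heig, Matrix.smul_mulVec, Matrix.one_mulVec]
    simp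
  have hdet2 : (((A - G * K)ᵀ).map c - (starRingEnd ℂ μ) • 1).det = 0 :=
    Matrix.exists_mulVec_eq_zero_iff.mp ⟨v, hv0, heig2⟩
  have hdet3 : (((A - G * K)).map c - μ • 1).det = 0 :=
    det_shift_transpose _ _ hdet2
  have : μ ∈ spectrum ℂ ((A - G * K).map c) := (spec_iff_det _ μ).mpr hdet3
  exact absurd (hK μ this) (not_lt.mpr hge)
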